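/- Let n ≥ 2, m ≥ 2, μ ∈ ℝ, let P be an orthogonal n×n matrix, and let B_1 = P H₁ Pᵗ, B_2 = P H₂ Pᵗ, and B_r = 0 for 3 ≤ r ≤ m, where H₁ is the n×n matrix with (1,2) and (2,1) entries equal to μ and all other entries 0, and H₂ is the n×n diagonal matrix with (1,1) entry μ, (2,2) entry −μ, and all other entries 0. Then Σ_{r,s=1}^m ‖[B_r, B_s]‖² = (Σ_{r=1}^m ‖B_r‖²)². -/

import Mathlib

open Matrix BigOperators

/-- The squared Frobenius norm: sum of squares of the entries. -/
noncomputable def frobSq {n : ℕ} (A : Matrix (Fin n) (Fin n) ℝ) : ℝ :=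
  ∑ i, ∑ j, (A i j) ^ 2

/-- The commutator of two matrices. -/
def mcomm {n : ℕ} (A B : Matrix (Fin n) (Fin n) ℝ) : Matrix (Fin n) (Fin n) ℝ :=
  A * B - B * A

/-- The n×n matrix with (1,2) and (2,1) entries equal to μ and all other entries 0
(using 0-based indices 0 and 1). -/
def H1 (n : ℕ) (μ : ℝ) : Matrix (Fin n) (Fin n) ℝ :=
  Matrix.of fun i j => if (i.1 = 0 ∧ j.1 = 1) ∨ (i.1 = 1 ∧ j.1 = 0) then μ else 0

/-- The n×n diagonal matrix with (1,1) entry μ, (2,2) entry −μ and all other entries 0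
(using 0-based indices 0 and 1). -/
def H2 (n : ℕ) (μ : ℝ) : Matrix (Fin n) (Fin n) ℝ :=
  Matrix.of fun i j =>
    if i.1 = 0 ∧ j.1 = 0 then μ else if i.1 = 1 ∧ j.1 = 1 then -μ else 0

lemma frobSq_eq_trace {n : ℕ} (A : Matrix (Fin n) (Fin n) ℝ) :
    frobSq A = Matrix.trace (Aᵀ * A) := by
  simp only [frobSq, Matrix.trace, Matrix.diag, Matrix.mul_apply, Matrix.transpose_apply, sq]
  rw [Finset.sum_comm]

lemma frobSq_conj {n : ℕ} (P A : Matrix (Fin n) (Fin n) ℝ)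
    (h1 : P * Pᵀ = 1) (h2 : Pᵀ * P = 1) : frobSq (P * A * Pᵀ) = frobSq A := by
  rw [frobSq_eq_trace, frobSq_eq_trace A]
  rw [show (P * A * Pᵀ)ᵀ = P * Aᵀ * Pᵀ by
    simp [Matrix.transpose_mul, Matrix.mul_assoc]]
  rw [show P * Aᵀ * Pᵀ * (P * A * Pᵀ) = P * (Aᵀ * A) * Pᵀ by
    simp only [← Matrix.mul_assoc]
    rw [Matrix.mul_assoc (P * Aᵀ) Pᵀ P, h2, Matrix.mul_one, Matrix.mul_assoc P Aᵀ A]]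
  rw [Matrix.trace_mul_cycle, ← Matrix.mul_assoc, h2, Matrix.one_mul]

lemma frobSq_add_std {n : ℕ} (a b a' b' : Fin n) (h : a ≠ a') (c c' : ℝ) :
    frobSq (Matrix.single a b c + Matrix.single a' b' c') = c ^ 2 + c' ^ 2 := by
  have key : ∀ i j : Fin n,
      ((Matrix.single a b c + Matrix.single a' b' c') i j) ^ 2
      = (if a = i ∧ b = j then c ^ 2 else 0) + (if a' = i ∧ b' = j then c' ^ 2 else 0) := by
    intro i j
    simp only [Matrix.add_apply, Matrix.single, Matrix.of_apply]
    split_ifs with h1 h2 h2 <;> try ring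
    exact absurd (h1.1.trans h2.1.symm) h
  simp only [frobSq, key]
  simp [Finset.sum_add_distrib, ite_and, Finset.sum_ite_eq]

lemma sum_sum_ite {m : ℕ} (a b : Fin m) (c : ℝ) :
    (∑ x : Fin m, ∑ y : Fin m, if x = a ∧ y = b then c else 0) = c := by
  simp [ite_and, Finset.sum_ite_eq']

section Main

variable {n : ℕ}

lemma H1_eq (hn : 2 ≤ n) (μ : ℝ) :
    H1 n μ = Matrix.single (⟨0, by omega⟩ : Fin n) ⟨1, by omega⟩ μ
      + Matrix.single (⟨1, by omega⟩ : Fin n) ⟨0, by omega⟩ μ := by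
  ext i j
  simp only [H1, Matrix.of_apply, Matrix.add_apply, Matrix.single, Fin.ext_iff]
  split_ifs <;> first | (exfalso; omega) | ring

lemma H2_eq (hn : 2 ≤ n) (μ : ℝ) :
    H2 n μ = Matrix.single (⟨0, by omega⟩ : Fin n) ⟨0, by omega⟩ μ
      + Matrix.single (⟨1, by omega⟩ : Fin n) ⟨1, by omega⟩ (-μ) := by
  ext i j
  simp only [H2, Matrix.of_apply, Matrix.add_apply, Matrix.single, Fin.ext_iff]
  split_ifs <;> first | (exfalso; omega) | ring

lemma mcomm_H1_H2 (hn : 2 ≤ n) (μ : ℝ) :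
    mcomm (H1 n μ) (H2 n μ)
      = Matrix.single (⟨0, by omega⟩ : Fin n) ⟨1, by omega⟩ (-(2*μ^2))
        + Matrix.single (⟨1, by omega⟩ : Fin n) ⟨0, by omega⟩ (2*μ^2) := by
  have h01 : (⟨0, by omega⟩ : Fin n) ≠ ⟨1, by omega⟩ := by simp [Fin.ext_iff]
  rw [mcomm, H1_eq hn, H2_eq hn]
  rw [add_mul, add_mul, mul_add, mul_add, mul_add, mul_add]
  simp only [Matrix.single_mul_single_same, Matrix.single_mul_single_of_ne, ne_eq, not_false_eq_true, h01,
    h01.symm, add_zero, zero_add]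
  ext i j
  simp only [Matrix.sub_apply, Matrix.add_apply, Matrix.zero_apply,
    Matrix.single, Matrix.of_apply]
  split_ifs <;> ring

end Main

/-- The family `B₁ = P H₁ Pᵗ`, `B₂ = P H₂ Pᵗ`, `B_r = 0` for `r ≥ 3` realizes equality
in the DDVV inequality. -/
theorem ddvv_equality_holds (n m : ℕ) (hn : 2 ≤ n) (hm : 2 ≤ m) (μ : ℝ)
    (P : Matrix (Fin n) (Fin n) ℝ) (hP : P ∈ Matrix.orthogonalGroup (Fin n) ℝ)
    (B : Fin m → Matrix (Fin n) (Fin n) ℝ)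
    (hB : ∀ r : Fin m, B r =
      if r.1 = 0 then P * H1 n μ * Pᵀ else if r.1 = 1 then P * H2 n μ * Pᵀ else 0) :
    ∑ r, ∑ s, frobSq (mcomm (B r) (B s)) = (∑ r, frobSq (B r)) ^ 2 := by
  have h1 : P * Pᵀ = 1 := by
    simpa [Matrix.star_eq_conjTranspose, Matrix.conjTranspose] using
      (Matrix.mem_orthogonalGroup_iff (Fin n) ℝ).mp hP
  have h2 : Pᵀ * P = 1 := by
    simpa [Matrix.star_eq_conjTranspose, Matrix.conjTranspose] using
      (Matrix.mem_orthogonalGroup_iff' (Fin n) ℝ).mp hP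
  set i0 : Fin n := ⟨0, by omega⟩ with hi0
  set i1 : Fin n := ⟨1, by omega⟩ with hi1
  have h01 : i0 ≠ i1 := by simp [hi0, hi1, Fin.ext_iff]
  set r0 : Fin m := ⟨0, by omega⟩ with hr0
  set r1 : Fin m := ⟨1, by omega⟩ with hr1
  have hr01 : r0 ≠ r1 := by simp [hr0, hr1, Fin.ext_iff]
  have hB0 : B r0 = P * H1 n μ * Pᵀ := by rw [hB r0]; rfl
  have hB1 : B r1 = P * H2 n μ * Pᵀ := by rw [hB r1]; rfl
  have hBz : ∀ r : Fin m, r ≠ r0 → r ≠ r1 → B r = 0 := by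
    intro r ha hb
    rw [hB r]
    have h0 : r.1 ≠ 0 := fun h => ha (Fin.ext h)
    have h1' : r.1 ≠ 1 := fun h => hb (Fin.ext h)
    simp [h0, h1']
  -- frobSq values
  have fH1 : frobSq (B r0) = 2 * μ ^ 2 := by
    rw [hB0, frobSq_conj P _ h1 h2, H1_eq hn, frobSq_add_std _ _ _ _ h01]
    ring
  have fH2 : frobSq (B r1) = 2 * μ ^ 2 := by
    rw [hB1, frobSq_conj P _ h1 h2, H2_eq hn, frobSq_add_std _ _ _ _ h01]
    ring
  -- commutator values
  have hconj : ∀ A C : Matrix (Fin n) (Fin n) ℝ,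
      mcomm (P * A * Pᵀ) (P * C * Pᵀ) = P * mcomm A C * Pᵀ := by
    intro A C
    simp only [mcomm, Matrix.mul_sub, Matrix.sub_mul]
    congr 1
    · simp only [← Matrix.mul_assoc]
      rw [Matrix.mul_assoc (P * A) Pᵀ P, h2, Matrix.mul_one, Matrix.mul_assoc P A C]
    · simp only [← Matrix.mul_assoc]
      rw [Matrix.mul_assoc (P * C) Pᵀ P, h2, Matrix.mul_one, Matrix.mul_assoc P C A]
  have fC : frobSq (mcomm (B r0) (B r1)) = 8 * μ ^ 4 := by
    rw [hB0, hB1, hconj, frobSq_conj P _ h1 h2, mcomm_H1_H2 hn, frobSq_add_std _ _ _ _ h01]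
    ring
  have fC' : frobSq (mcomm (B r1) (B r0)) = 8 * μ ^ 4 := by
    have hneg : mcomm (B r1) (B r0) = -(mcomm (B r0) (B r1)) := by
      simp [mcomm, neg_sub]
    rw [hneg, show frobSq (-(mcomm (B r0) (B r1))) = frobSq (mcomm (B r0) (B r1)) by
      simp [frobSq]]
    exact fC
  -- pointwise descriptions
  have hf : ∀ r s : Fin m, frobSq (mcomm (B r) (B s))
      = (if r = r0 ∧ s = r1 then 8 * μ ^ 4 else 0)
        + (if r = r1 ∧ s = r0 then 8 * μ ^ 4 else 0) := by
    intro r s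
    by_cases hrs : r = r0 ∧ s = r1
    · rw [hrs.1, hrs.2, if_pos ⟨rfl, rfl⟩, if_neg (by simp [hr01, hr01.symm]), fC]; ring
    by_cases hrs' : r = r1 ∧ s = r0
    · rw [hrs'.1, hrs'.2, if_neg (by simp [hr01, hr01.symm]), if_pos ⟨rfl, rfl⟩, fC']; ring
    rw [if_neg hrs, if_neg hrs']
    have hz : mcomm (B r) (B s) = 0 := by
      by_cases h : r = s
      · subst h; simp [mcomm]
      have hsplit : (r ≠ r0 ∧ r ≠ r1) ∨ (s ≠ r0 ∧ s ≠ r1) := by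
        by_cases hra : r = r0
        · exact Or.inr ⟨fun hs => h (hra.trans hs.symm), fun hs => hrs ⟨hra, hs⟩⟩
        by_cases hrb : r = r1
        · exact Or.inr ⟨fun hs => hrs' ⟨hrb, hs⟩, fun hs => h (hrb.trans hs.symm)⟩
        exact Or.inl ⟨hra, hrb⟩
      rcases hsplit with ⟨ha, hb⟩ | ⟨ha, hb⟩
      · rw [hBz r ha hb]; simp [mcomm]
      · rw [hBz s ha hb]; simp [mcomm]
    rw [hz]; simp [frobSq]
  have hg : ∀ r : Fin m, frobSq (B r)
      = (if r = r0 then 2 * μ ^ 2 else 0) + (if r = r1 then 2 * μ ^ 2 else 0) := by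
    intro r
    by_cases h : r = r0
    · subst h; rw [if_pos rfl, if_neg hr01, fH1]; ring
    by_cases h' : r = r1
    · subst h'; rw [if_neg hr01.symm, if_pos rfl, fH2]; ring
    rw [if_neg h, if_neg h', hBz r h h']; simp [frobSq]
  simp only [hf, hg]
  rw [Finset.sum_add_distrib]
  simp only [Finset.sum_add_distrib] at *
  rw [show (∑ r : Fin m, ∑ s : Fin m, if r = r0 ∧ s = r1 then 8 * μ ^ 4 else 0)
      = 8 * μ ^ 4 from sum_sum_ite r0 r1 _,
    show (∑ r : Fin m, ∑ s : Fin m, if r = r1 ∧ s = r0 then 8 * μ ^ 4 else 0)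
      = 8 * μ ^ 4 from sum_sum_ite r1 r0 _]
  simp [Finset.sum_ite_eq']
  ring
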